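/- arXiv:2410.04432 — 3 statements merged into one kernel-verified Lean document; each statement's English description precedes it below -/
import Mathlib

section
/- For nonnegative integers k ≤ i and q > 0, the alternating sum ∑_{l=0}^{k} (-1)^l q^{binom(l+1,2)} qbinom(k, l) qbinom(i - l, k) equals 1, where binom(l+1,2) = l(l+1)/2 is the ordinary binomial coefficient. -/
open Finset Matrix

noncomputable def qInt (q : ℝ) (m : ℕ) : ℝ := ∑ i ∈ Finset.range m, q ^ i

noncomputable def qFact (q : ℝ) (m : ℕ) : ℝ := ∏ i ∈ Finset.range m, qInt q (i + 1)

noncomputable def qBinom (q : ℝ) (m k : ℕ) : ℝ :=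
  if k ≤ m then qFact q m / (qFact q k * qFact q (m - k)) else 0

variable {q : ℝ}

lemma qInt_pos (hq : 0 < q) (m : ℕ) (hm : 0 < m) : 0 < qInt q m := by
  unfold qInt
  apply Finset.sum_pos (fun i _ => pow_pos hq i)
  exact Finset.nonempty_range_iff.mpr hm.ne'

lemma qFact_pos (hq : 0 < q) (m : ℕ) : 0 < qFact q m := by
  unfold qFact
  exact Finset.prod_pos fun i _ => qInt_pos hq _ (Nat.succ_pos i)

lemma qFact_succ (q : ℝ) (m : ℕ) : qFact q (m + 1) = qFact q m * qInt q (m + 1) := by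
  unfold qFact; rw [Finset.prod_range_succ]

lemma qFact_zero (q : ℝ) : qFact q 0 = 1 := by unfold qFact; simp

lemma qInt_add (q : ℝ) (a b : ℕ) : qInt q (a + b) = qInt q a + q ^ a * qInt q b := by
  unfold qInt
  rw [Finset.sum_range_add, Finset.mul_sum]
  simp [pow_add]

lemma qBinom_zero (hq : 0 < q) (m : ℕ) : qBinom q m 0 = 1 := by
  unfold qBinom
  rw [if_pos (Nat.zero_le m), qFact_zero, Nat.sub_zero]
  field_simp [(qFact_pos hq m).ne']

lemma qBinom_self (hq : 0 < q) (m : ℕ) : qBinom q m m = 1 := by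
  unfold qBinom
  rw [if_pos le_rfl, Nat.sub_self, qFact_zero]
  field_simp [(qFact_pos hq m).ne']

lemma qBinom_of_lt {m k : ℕ} (h : m < k) : qBinom q m k = 0 := by
  unfold qBinom; rw [if_neg (by omega)]

lemma pascal (hq : 0 < q) (n k : ℕ) :
    qBinom q (n + 1) (k + 1) = qBinom q n (k + 1) + q ^ (n - k) * qBinom q n k := by
  rcases lt_trichotomy k n with h | rfl | h
  · obtain ⟨a, rfl⟩ : ∃ a, n = k + 1 + a := ⟨n - k - 1, by omega⟩
    unfold qBinom
    rw [if_pos (by omega), if_pos (by omega), if_pos (by omega)]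
    have h1 : k + 1 + a + 1 - (k + 1) = a + 1 := by omega
    have h2 : k + 1 + a - (k + 1) = a := by omega
    have h3 : k + 1 + a - k = a + 1 := by omega
    rw [h1, h2, h3]
    have key : qInt q (k + 1 + a + 1) = qInt q (a + 1) + q ^ (a + 1) * qInt q (k + 1) := by
      have := qInt_add q (a + 1) (k + 1)
      rw [show a + 1 + (k + 1) = k + 1 + a + 1 by omega] at this
      exact this
    rw [show k + 1 + a + 1 = (k + 1 + a) + 1 from rfl, qFact_succ, qFact_succ q a,
      qFact_succ q k, key]
    have e1 := (qFact_pos hq (k + 1 + a)).ne'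
    have e2 := (qFact_pos hq k).ne'
    have e3 := (qFact_pos hq a).ne'
    have e4 := (qInt_pos hq (a + 1) (by omega)).ne'
    have e5 := (qInt_pos hq (k + 1) (by omega)).ne'
    field_simp
  · rw [qBinom_self hq, qBinom_of_lt (by omega), qBinom_self hq, Nat.sub_self]
    norm_num
  · rw [qBinom_of_lt (by omega), qBinom_of_lt (by omega), qBinom_of_lt (by omega)]
    ring

lemma pascal' (hq : 0 < q) (k l : ℕ) :
    qBinom q (k + 1) (l + 1) = q ^ (l + 1) * qBinom q k (l + 1) + qBinom q k l := by
  rcases lt_trichotomy l k with h | rfl | h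
  · obtain ⟨a, rfl⟩ : ∃ a, k = l + 1 + a := ⟨k - l - 1, by omega⟩
    unfold qBinom
    rw [if_pos (by omega), if_pos (by omega), if_pos (by omega)]
    have h1 : l + 1 + a + 1 - (l + 1) = a + 1 := by omega
    have h2 : l + 1 + a - (l + 1) = a := by omega
    have h3 : l + 1 + a - l = a + 1 := by omega
    rw [h1, h2, h3]
    have key : qInt q (l + 1 + a + 1) = qInt q (l + 1) + q ^ (l + 1) * qInt q (a + 1) := by
      have := qInt_add q (l + 1) (a + 1)
      rw [show l + 1 + (a + 1) = l + 1 + a + 1 by omega] at this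
      exact this
    rw [show l + 1 + a + 1 = (l + 1 + a) + 1 from rfl, qFact_succ, qFact_succ q a,
      qFact_succ q l, key]
    have e1 := (qFact_pos hq (l + 1 + a)).ne'
    have e2 := (qFact_pos hq l).ne'
    have e3 := (qFact_pos hq a).ne'
    have e4 := (qInt_pos hq (a + 1) (by omega)).ne'
    have e5 := (qInt_pos hq (l + 1) (by omega)).ne'
    field_simp
    ring
  · rw [qBinom_self hq, qBinom_of_lt (by omega), qBinom_self hq]
    ring
  · rw [qBinom_of_lt (by omega), qBinom_of_lt (by omega), qBinom_of_lt (by omega)]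
    ring

theorem qAlternatingSum_eq_one (q : ℝ) (hq : 0 < q) (k i : ℕ) (hki : k ≤ i) :
    ∑ l ∈ Finset.range (k + 1),
      (-1 : ℝ) ^ l * q ^ ((l + 1).choose 2) * qBinom q k l * qBinom q (i - l) k = 1 := by
  induction k generalizing i with
  | zero =>
    simp [Finset.sum_range_one, qBinom_zero hq, qBinom_self hq, Nat.choose]
  | succ k IH =>
    induction i, hki using Nat.le_induction with
    | base =>
      rw [Finset.sum_range_succ']
      have h0 : ∑ j ∈ Finset.range (k + 1), (-1 : ℝ) ^ (j + 1) * q ^ ((j + 1 + 1).choose 2) *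
          qBinom q (k + 1) (j + 1) * qBinom q (k + 1 - (j + 1)) (k + 1) = 0 := by
        apply Finset.sum_eq_zero
        intro j hj
        rw [qBinom_of_lt (show k + 1 - (j + 1) < k + 1 by omega)]
        ring
      rw [h0]
      simp [qBinom_zero hq, qBinom_self hq, Nat.choose]
    | succ i hik ih2 =>
      have hZ : ∑ l ∈ Finset.range (k + 2),
          (-1 : ℝ) ^ l * q ^ (l.choose 2) * qBinom q (k + 1) l * qBinom q (i - l) k = 0 := by
        rw [Finset.sum_range_succ']
        have h1 : ∀ j ∈ Finset.range (k + 1),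
            (-1 : ℝ) ^ (j + 1) * q ^ ((j + 1).choose 2) * qBinom q (k + 1) (j + 1) *
              qBinom q (i - (j + 1)) k
            = ((-1 : ℝ) ^ (j + 1) * q ^ ((j + 1 + 1).choose 2) * qBinom q k (j + 1) *
                qBinom q (i - (j + 1)) k)
              - ((-1 : ℝ) ^ j * q ^ ((j + 1).choose 2) * qBinom q k j *
                qBinom q ((i - 1) - j) k) := by
          intro j hj
          rw [pascal' hq]
          have he : (j + 1 + 1).choose 2 = (j + 1).choose 2 + (j + 1) := by
            have h2 := Nat.choose_succ_succ (j + 1) 1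
            rw [Nat.choose_one_right] at h2
            norm_num at h2
            omega
          have hsub : (i - 1) - j = i - (j + 1) := by omega
          rw [hsub, he, pow_add]
          ring
        rw [Finset.sum_congr rfl h1, Finset.sum_sub_distrib]
        set G : ℕ → ℝ := fun m =>
          (-1 : ℝ) ^ m * q ^ ((m + 1).choose 2) * qBinom q k m * qBinom q (i - m) k with hG
        have key := Finset.sum_range_succ' G (k + 1)
        have htop : ∑ m ∈ Finset.range (k + 2), G m = 1 := by
          rw [Finset.sum_range_succ]
          have : G (k + 1) = 0 := by
            simp only [hG, qBinom_of_lt (Nat.lt_succ_self k)]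
            ring
          rw [this, IH i (by omega)]
          ring
        have hG0 : G 0 = qBinom q i k := by
          simp [hG, qBinom_zero hq, Nat.choose]
        have hSi1 : ∑ j ∈ Finset.range (k + 1),
            (-1 : ℝ) ^ j * q ^ ((j + 1).choose 2) * qBinom q k j * qBinom q ((i - 1) - j) k
            = 1 := IH (i - 1) (by omega)
        have hf0 : (-1 : ℝ) ^ 0 * q ^ (Nat.choose 0 2) * qBinom q (k + 1) 0 *
            qBinom q (i - 0) k = qBinom q i k := by
          simp [qBinom_zero hq, Nat.choose]
        have hGsum : ∑ j ∈ Finset.range (k + 1), G (j + 1) = 1 - qBinom q i k := by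
          rw [htop] at key
          rw [← hG0]
          linarith
        have hmatch : ∑ j ∈ Finset.range (k + 1),
            (-1 : ℝ) ^ (j + 1) * q ^ ((j + 1 + 1).choose 2) * qBinom q k (j + 1) *
              qBinom q (i - (j + 1)) k = ∑ j ∈ Finset.range (k + 1), G (j + 1) := rfl
        rw [hmatch, hGsum, hSi1, hf0]
        ring
      have hsplit : ∑ l ∈ Finset.range (k + 1 + 1),
          (-1 : ℝ) ^ l * q ^ ((l + 1).choose 2) * qBinom q (k + 1) l *
            qBinom q (i + 1 - l) (k + 1)
          = (∑ l ∈ Finset.range (k + 2), (-1 : ℝ) ^ l * q ^ ((l + 1).choose 2) *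
              qBinom q (k + 1) l * qBinom q (i - l) (k + 1))
            + q ^ (i - k) * ∑ l ∈ Finset.range (k + 2),
              (-1 : ℝ) ^ l * q ^ (l.choose 2) * qBinom q (k + 1) l * qBinom q (i - l) k := by
        rw [Finset.mul_sum, ← Finset.sum_add_distrib]
        apply Finset.sum_congr rfl
        intro l hl
        have hl' : l ≤ k + 1 := by
          simp only [Finset.mem_range] at hl; omega
        have h1 : i + 1 - l = (i - l) + 1 := by omega
        rw [h1, pascal hq (i - l) k]
        by_cases hc : k ≤ i - l
        · have hpow : q ^ ((l + 1).choose 2) * q ^ (i - l - k)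
              = q ^ (i - k) * q ^ (l.choose 2) := by
            rw [← pow_add, ← pow_add]
            congr 1
            have h2 := Nat.choose_succ_succ l 1
            rw [Nat.choose_one_right] at h2
            norm_num at h2
            omega
          linear_combination ((-1 : ℝ) ^ l * qBinom q (k + 1) l * qBinom q (i - l) k) * hpow
        · rw [qBinom_of_lt (show i - l < k by omega)]
          ring
      rw [hsplit, hZ]
      have : ∑ l ∈ Finset.range (k + 2), (-1 : ℝ) ^ l * q ^ ((l + 1).choose 2) *
          qBinom q (k + 1) l * qBinom q (i - l) (k + 1) = 1 := ih2
      rw [this]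
      ring
end

section
/- For a decreasing sequence of negative nodes 0 > t_1 > ⋯ > t_{n+1}, the Neville elimination data of V_J := V J satisfies: multipliers m_{i,j} = ∏_{k=1}^{j-1} (t_i - t_{i-k})/(t_{i-1} - t_{i-k-1}) > 0, diagonal pivots p_{i,i} = (-1)^{i-1} ∏_{k=1}^{i-1} (t_i - t_k) > 0, and multipliers of the transpose m̃_{j,i} = -t_i > 0. -/
open Finset Matrix

def IsTotallyPos {n : ℕ} (A : Matrix (Fin n) (Fin n) ℝ) : Prop :=
  ∀ (k : ℕ) (f g : Fin k → Fin n), StrictMono f → StrictMono g →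
    0 ≤ (A.submatrix f g).det

def IsStrictTotallyPos {n : ℕ} (A : Matrix (Fin n) (Fin n) ℝ) : Prop :=
  ∀ (k : ℕ) (f g : Fin k → Fin n), StrictMono f → StrictMono g →
    0 < (A.submatrix f g).det

noncomputable def Jmat (n : ℕ) : Matrix (Fin (n + 1)) (Fin (n + 1)) ℝ :=
  Matrix.diagonal fun i => (-1 : ℝ) ^ (i : ℕ)

noncomputable def nevilleStep (n k : ℕ) (B : Matrix (Fin (n + 1)) (Fin (n + 1)) ℝ) :
    Matrix (Fin (n + 1)) (Fin (n + 1)) ℝ :=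
  Matrix.of fun i j =>
    let r : Fin (n + 1) := ⟨i.1 - 1, Nat.lt_of_le_of_lt (Nat.sub_le _ _) i.2⟩
    let c : Fin (n + 1) := ⟨min (k - 1) n, Nat.lt_succ_of_le (min_le_right _ _)⟩
    if 1 ≤ k ∧ k ≤ i.1 ∧ k ≤ j.1 ∧ B r c ≠ 0 then
      B i j - (B i c / B r c) * B r j
    else B i j

/-- `nevilleIter n A k` is the matrix `A^{(k)}` of the Neville elimination of `A`
(with `A^{(1)} = A`, and `A^{(0)} = A` by convention). -/
noncomputable def nevilleIter (n : ℕ) (A : Matrix (Fin (n + 1)) (Fin (n + 1)) ℝ) :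
    ℕ → Matrix (Fin (n + 1)) (Fin (n + 1)) ℝ
  | 0 => A
  | k + 1 => nevilleStep n k (nevilleIter n A k)


noncomputable def Hpoly (s : ℕ → ℝ) : ℕ → ℕ → ℕ → ℝ
  | 0, _, _ => 1
  | m + 1, a, 0 => s a * Hpoly s m a 0
  | m + 1, a, c + 1 => Hpoly s (m + 1) a c + s (a + c + 1) * Hpoly s m a (c + 1)
  termination_by m _ c => (m, c)

lemma Hpoly_zero (s : ℕ → ℝ) (a c : ℕ) : Hpoly s 0 a c = 1 := by simp [Hpoly]

lemma Hpoly_single (s : ℕ → ℝ) (m a : ℕ) : Hpoly s m a 0 = s a ^ m := by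
  induction m with
  | zero => simp [Hpoly]
  | succ m ih => rw [Hpoly, ih]; ring

lemma Hpoly_succ (s : ℕ → ℝ) (m a c : ℕ) :
    Hpoly s (m + 1) a (c + 1) = Hpoly s (m + 1) a c + s (a + c + 1) * Hpoly s m a (c + 1) := by
  rw [Hpoly]

lemma Hpoly_one (s : ℕ → ℝ) (a c : ℕ) : Hpoly s 1 a c = ∑ i ∈ range (c + 1), s (a + i) := by
  induction c with
  | zero => simp [Hpoly_single]
  | succ c ih =>
    rw [Hpoly_succ, ih, Hpoly_zero, Finset.sum_range_succ (fun i => s (a + i)) (c + 1),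
      mul_one, show a + c + 1 = a + (c + 1) by omega]

lemma Hpoly_shift (s : ℕ → ℝ) (m : ℕ) :
    ∀ c a, Hpoly s (m + 1) a (c + 1) = Hpoly s (m + 1) (a + 1) c + s a * Hpoly s m a (c + 1) := by
  induction m with
  | zero =>
    intro c a
    rw [Hpoly_zero, Hpoly_one, Hpoly_one, Finset.sum_range_succ']
    have hc : ∀ i ∈ range (c + 1), s (a + (i + 1)) = s (a + 1 + i) := by
      intro i _
      rw [show a + (i + 1) = a + 1 + i by omega]
    rw [Finset.sum_congr rfl hc]
    simp only [Nat.add_zero, mul_one]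
  | succ m ihm =>
    intro c
    induction c with
    | zero =>
      intro a
      have e1 : Hpoly s (m + 1) a 1 = s a ^ (m + 1) + s (a + 1) * Hpoly s m a 1 := by
        have := Hpoly_succ s m a 0
        rw [Hpoly_single] at this
        simpa using this
      have e2 : Hpoly s (m + 1) a 1 = s (a + 1) ^ (m + 1) + s a * Hpoly s m a 1 := by
        rw [ihm 0 a, Hpoly_single]
      have e3 := Hpoly_succ s (m + 1) a 0
      rw [Hpoly_single] at e3
      simp only [Nat.add_zero, Nat.zero_add] at e3 ⊢
      rw [e3, Hpoly_single]
      linear_combination s (a + 1) * e2 - s a * e1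
    | succ c ihc =>
      intro a
      have A1 := ihc a
      have A2 := ihm (c + 1) a
      have A3 := Hpoly_succ s m a (c + 1)
      have L := Hpoly_succ s (m + 1) a (c + 1)
      have R := Hpoly_succ s (m + 1) (a + 1) c
      have hidx : a + 1 + c + 1 = a + c + 2 := by omega
      have hidx2 : a + (c + 1) + 1 = a + c + 2 := by omega
      rw [hidx] at R
      rw [hidx2] at L A3
      rw [L, R, A1]
      linear_combination s (a + c + 2) * A2 - s a * A3

lemma Hpoly_diff (s : ℕ → ℝ) (m c a : ℕ) :
    Hpoly s (m + 1) (a + 1) c - Hpoly s (m + 1) a c =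
      (s (a + c + 1) - s a) * Hpoly s m a (c + 1) := by
  have h1 := Hpoly_shift s m c a
  have h2 : Hpoly s (m + 1) a (c + 1) =
      Hpoly s (m + 1) a c + s (a + c + 1) * Hpoly s m a (c + 1) := by
    cases c with
    | zero =>
      have := Hpoly_succ s m a 0
      simpa using this
    | succ c => exact Hpoly_succ s m a (c + 1)
  linear_combination h2 - h1

noncomputable def Pprod (s : ℕ → ℝ) (i m : ℕ) : ℝ :=
  ∏ l ∈ Finset.range m, (s i - s (i - (l + 1)))

lemma Pprod_pos {n : ℕ} (s : ℕ → ℝ) (hmono : ∀ a b : ℕ, a < b → b ≤ n → s a < s b)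
    {i m : ℕ} (hmi : m ≤ i) (hin : i ≤ n) : 0 < Pprod s i m := by
  apply Finset.prod_pos
  intro l hl
  rw [Finset.mem_range] at hl
  have : s (i - (l + 1)) < s i := hmono _ _ (by omega) hin
  linarith

lemma nevilleStep_apply (n k : ℕ) (B : Matrix (Fin (n + 1)) (Fin (n + 1)) ℝ)
    (i j : Fin (n + 1)) :
    nevilleStep n k B i j =
      if 1 ≤ k ∧ k ≤ i.1 ∧ k ≤ j.1 ∧
          B ⟨i.1 - 1, Nat.lt_of_le_of_lt (Nat.sub_le _ _) i.2⟩
            ⟨min (k - 1) n, Nat.lt_succ_of_le (min_le_right _ _)⟩ ≠ 0 then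
        B i j - (B i ⟨min (k - 1) n, Nat.lt_succ_of_le (min_le_right _ _)⟩ /
            B ⟨i.1 - 1, Nat.lt_of_le_of_lt (Nat.sub_le _ _) i.2⟩
              ⟨min (k - 1) n, Nat.lt_succ_of_le (min_le_right _ _)⟩) *
          B ⟨i.1 - 1, Nat.lt_of_le_of_lt (Nat.sub_le _ _) i.2⟩ j
      else B i j := rfl

lemma invA (n : ℕ) (s : ℕ → ℝ)
    (hmono : ∀ a b : ℕ, a < b → b ≤ n → s a < s b)
    (A : Matrix (Fin (n + 1)) (Fin (n + 1)) ℝ)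
    (hA : ∀ i j : Fin (n + 1), A i j = s (i : ℕ) ^ (j : ℕ)) :
    ∀ K : ℕ, ∀ i j : Fin (n + 1),
      nevilleIter n A K i j =
        Pprod s i (min (K - 1) (min (i : ℕ) (j : ℕ))) *
          Hpoly s ((j : ℕ) - min (K - 1) (min (i : ℕ) (j : ℕ)))
            ((i : ℕ) - min (K - 1) (min (i : ℕ) (j : ℕ)))
            (min (K - 1) (min (i : ℕ) (j : ℕ))) := by
  intro K
  induction K with
  | zero =>
    intro i j
    have h0 : min (0 - 1) (min (i : ℕ) (j : ℕ)) = 0 := by omega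
    rw [h0]
    simp [nevilleIter, Pprod, Hpoly_single, hA]
  | succ K ih =>
    intro i j
    show nevilleStep n K (nevilleIter n A K) i j = _
    rw [nevilleStep_apply]
    by_cases hc : 1 ≤ K ∧ K ≤ i.1 ∧ K ≤ j.1
    · obtain ⟨hK1, hKi, hKj⟩ := hc
      have hin : (i : ℕ) ≤ n := by omega
      have hjn : (j : ℕ) ≤ n := by omega
      have hKn : K ≤ n := le_trans hKj hjn
      set r : Fin (n + 1) := ⟨i.1 - 1, Nat.lt_of_le_of_lt (Nat.sub_le _ _) i.2⟩ with hr
      set c : Fin (n + 1) := ⟨min (K - 1) n, Nat.lt_succ_of_le (min_le_right _ _)⟩ with hcdef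
      have hrv : (r : ℕ) = i.1 - 1 := rfl
      have hcv : (c : ℕ) = K - 1 := by simp [hcdef]; omega
      -- entry values from ih
      have E3 : nevilleIter n A K r c = Pprod s (i.1 - 1) (K - 1) := by
        rw [ih r c, hrv, hcv]
        rw [show min (K - 1) (min (i.1 - 1) (K - 1)) = K - 1 by omega]
        rw [show K - 1 - (K - 1) = 0 by omega, Hpoly_zero, mul_one]
      have E2 : nevilleIter n A K i c = Pprod s i.1 (K - 1) := by
        rw [ih i c, hcv]
        rw [show min (K - 1) (min (i.1) (K - 1)) = K - 1 by omega]
        rw [show K - 1 - (K - 1) = 0 by omega, Hpoly_zero, mul_one]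
      have E1 : nevilleIter n A K i j =
          Pprod s i.1 (K - 1) * Hpoly s (j.1 - K + 1) (i.1 - K + 1) (K - 1) := by
        rw [ih i j]
        rw [show min (K - 1) (min (i.1) (j.1)) = K - 1 by omega]
        rw [show j.1 - (K - 1) = j.1 - K + 1 by omega, show i.1 - (K - 1) = i.1 - K + 1 by omega]
      have E4 : nevilleIter n A K r j =
          Pprod s (i.1 - 1) (K - 1) * Hpoly s (j.1 - K + 1) (i.1 - K) (K - 1) := by
        rw [ih r j, hrv]
        rw [show min (K - 1) (min (i.1 - 1) (j.1)) = K - 1 by omega]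
        rw [show j.1 - (K - 1) = j.1 - K + 1 by omega, show i.1 - 1 - (K - 1) = i.1 - K by omega]
      have hP3pos : 0 < Pprod s (i.1 - 1) (K - 1) :=
        Pprod_pos s hmono (by omega) (by omega)
      have hne : nevilleIter n A K r c ≠ 0 := by rw [E3]; exact ne_of_gt hP3pos
      rw [if_pos ⟨hK1, hKi, hKj, hne⟩]
      rw [E1, E2, E3, E4]
      have hdiv : Pprod s i.1 (K - 1) / Pprod s (i.1 - 1) (K - 1) *
          (Pprod s (i.1 - 1) (K - 1) * Hpoly s (j.1 - K + 1) (i.1 - K) (K - 1)) =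
          Pprod s i.1 (K - 1) * Hpoly s (j.1 - K + 1) (i.1 - K) (K - 1) := by
        field_simp
      rw [hdiv]
      rw [show Pprod s i.1 (K - 1) * Hpoly s (j.1 - K + 1) (i.1 - K + 1) (K - 1) -
            Pprod s i.1 (K - 1) * Hpoly s (j.1 - K + 1) (i.1 - K) (K - 1) =
          Pprod s i.1 (K - 1) *
            (Hpoly s (j.1 - K + 1) (i.1 - K + 1) (K - 1) -
             Hpoly s (j.1 - K + 1) (i.1 - K) (K - 1)) by ring]
      have hd := Hpoly_diff s (j.1 - K) (K - 1) (i.1 - K)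
      rw [show j.1 - K + 1 = (j.1 - K) + 1 by omega] at *
      rw [hd]
      rw [show i.1 - K + (K - 1) + 1 = i.1 by omega, show (K - 1) + 1 = K by omega]
      have hPP : Pprod s i.1 K = Pprod s i.1 (K - 1) * (s i.1 - s (i.1 - K)) := by
        rw [show Pprod s i.1 K = ∏ l ∈ Finset.range (K - 1 + 1), (s i.1 - s (i.1 - (l + 1))) by
              rw [show K - 1 + 1 = K by omega]; rfl]
        rw [Finset.prod_range_succ, show K - 1 + 1 = K by omega]
        rfl
      rw [show (K + 1 - 1 : ℕ) = K by omega]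
      rw [show min K (min (i.1) (j.1)) = K by omega]
      rw [hPP]
      ring
    · rw [if_neg (by tauto)]
      rw [ih i j]
      rw [show min (K - 1) (min (i.1) (j.1)) = min (K + 1 - 1) (min (i.1) (j.1)) by omega]

noncomputable def Qprod (s : ℕ → ℝ) (j m : ℕ) : ℝ :=
  ∏ l ∈ Finset.range m, (s j - s l)

lemma Qprod_pos {n : ℕ} (s : ℕ → ℝ) (hmono : ∀ a b : ℕ, a < b → b ≤ n → s a < s b)
    {j m : ℕ} (hmj : m ≤ j) (hjn : j ≤ n) : 0 < Qprod s j m := by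
  apply Finset.prod_pos
  intro l hl
  rw [Finset.mem_range] at hl
  have : s l < s j := hmono _ _ (by omega) hjn
  linarith

lemma invB (n : ℕ) (s : ℕ → ℝ) (hpos : ∀ x, 0 < s x)
    (hmono : ∀ a b : ℕ, a < b → b ≤ n → s a < s b)
    (B : Matrix (Fin (n + 1)) (Fin (n + 1)) ℝ)
    (hB : ∀ i j : Fin (n + 1), B i j = s (j : ℕ) ^ (i : ℕ)) :
    ∀ K : ℕ, ∀ i j : Fin (n + 1),
      nevilleIter n B K i j =
        s (j : ℕ) ^ ((i : ℕ) - min (K - 1) (min (i : ℕ) (j : ℕ))) *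
          Qprod s (j : ℕ) (min (K - 1) (min (i : ℕ) (j : ℕ))) := by
  intro K
  induction K with
  | zero =>
    intro i j
    have h0 : min (0 - 1) (min (i : ℕ) (j : ℕ)) = 0 := by omega
    rw [h0]
    simp [nevilleIter, Qprod, hB]
  | succ K ih =>
    intro i j
    show nevilleStep n K (nevilleIter n B K) i j = _
    rw [nevilleStep_apply]
    by_cases hc : 1 ≤ K ∧ K ≤ i.1 ∧ K ≤ j.1
    · obtain ⟨hK1, hKi, hKj⟩ := hc
      have hin : (i : ℕ) ≤ n := by omega
      have hjn : (j : ℕ) ≤ n := by omega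
      have hKn : K ≤ n := le_trans hKj hjn
      set r : Fin (n + 1) := ⟨i.1 - 1, Nat.lt_of_le_of_lt (Nat.sub_le _ _) i.2⟩ with hr
      set c : Fin (n + 1) := ⟨min (K - 1) n, Nat.lt_succ_of_le (min_le_right _ _)⟩ with hcdef
      have hrv : (r : ℕ) = i.1 - 1 := rfl
      have hcv : (c : ℕ) = K - 1 := by simp [hcdef]; omega
      have E3 : nevilleIter n B K r c =
          s (K - 1) ^ (i.1 - K) * Qprod s (K - 1) (K - 1) := by
        rw [ih r c, hrv, hcv]
        rw [show min (K - 1) (min (i.1 - 1) (K - 1)) = K - 1 by omega]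
        rw [show i.1 - 1 - (K - 1) = i.1 - K by omega]
      have E2 : nevilleIter n B K i c =
          s (K - 1) ^ (i.1 - K + 1) * Qprod s (K - 1) (K - 1) := by
        rw [ih i c, hcv]
        rw [show min (K - 1) (min (i.1) (K - 1)) = K - 1 by omega]
        rw [show i.1 - (K - 1) = i.1 - K + 1 by omega]
      have E1 : nevilleIter n B K i j =
          s j.1 ^ (i.1 - K + 1) * Qprod s j.1 (K - 1) := by
        rw [ih i j]
        rw [show min (K - 1) (min (i.1) (j.1)) = K - 1 by omega]
        rw [show i.1 - (K - 1) = i.1 - K + 1 by omega]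
      have E4 : nevilleIter n B K r j =
          s j.1 ^ (i.1 - K) * Qprod s j.1 (K - 1) := by
        rw [ih r j, hrv]
        rw [show min (K - 1) (min (i.1 - 1) (j.1)) = K - 1 by omega]
        rw [show i.1 - 1 - (K - 1) = i.1 - K by omega]
      have hQpos : 0 < Qprod s (K - 1) (K - 1) :=
        Qprod_pos s hmono (le_refl _) (by omega)
      have hppos : (0 : ℝ) < s (K - 1) ^ (i.1 - K) := pow_pos (hpos _) _
      have hne : nevilleIter n B K r c ≠ 0 := by
        rw [E3]; positivity
      rw [if_pos ⟨hK1, hKi, hKj, hne⟩]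
      rw [E1, E2, E3, E4]
      have hdiv : s (K - 1) ^ (i.1 - K + 1) * Qprod s (K - 1) (K - 1) /
          (s (K - 1) ^ (i.1 - K) * Qprod s (K - 1) (K - 1)) = s (K - 1) := by
        rw [pow_succ]
        field_simp
      rw [hdiv]
      have hQQ : Qprod s j.1 K = Qprod s j.1 (K - 1) * (s j.1 - s (K - 1)) := by
        rw [show Qprod s j.1 K = ∏ l ∈ Finset.range (K - 1 + 1), (s j.1 - s l) by
              rw [show K - 1 + 1 = K by omega]; rfl]
        rw [Finset.prod_range_succ]
        rfl
      rw [show (K + 1 - 1 : ℕ) = K by omega]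
      rw [show min K (min (i.1) (j.1)) = K by omega]
      rw [show i.1 - K + 1 = (i.1 - K) + 1 by omega, pow_succ, hQQ]
      ring
    · rw [if_neg (by tauto)]
      rw [ih i j]
      rw [show min (K - 1) (min (i.1) (j.1)) = min (K + 1 - 1) (min (i.1) (j.1)) by omega]

theorem vandermondeJ_neville_data (n : ℕ) (t : Fin (n + 1) → ℝ)
    (ht0 : t 0 < 0) (htd : StrictAnti t) :
    -- multipliers of the Neville elimination of V_J = V·J
    (∀ i j : ℕ, ∀ hj : 1 ≤ j, ∀ hji : j < i, ∀ hin : i ≤ n + 1,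
      nevilleIter n ((Matrix.of fun i j : Fin (n + 1) => t i ^ (j : ℕ)) * Jmat n) j
          ⟨i - 1, by omega⟩ ⟨j - 1, by omega⟩ /
        nevilleIter n ((Matrix.of fun i j : Fin (n + 1) => t i ^ (j : ℕ)) * Jmat n) j
          ⟨i - 2, by omega⟩ ⟨j - 1, by omega⟩ =
        ∏ k : Fin (j - 1),
          (t ⟨i - 1, by omega⟩ - t ⟨i - 2 - (k : ℕ), by omega⟩) /
            (t ⟨i - 2, by omega⟩ - t ⟨i - 3 - (k : ℕ), by omega⟩) ∧
      0 < ∏ k : Fin (j - 1),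
          (t ⟨i - 1, by omega⟩ - t ⟨i - 2 - (k : ℕ), by omega⟩) /
            (t ⟨i - 2, by omega⟩ - t ⟨i - 3 - (k : ℕ), by omega⟩)) ∧
    -- diagonal pivots of the Neville elimination of V_J
    (∀ i : ℕ, ∀ hi : 1 ≤ i, ∀ hin : i ≤ n + 1,
      nevilleIter n ((Matrix.of fun i j : Fin (n + 1) => t i ^ (j : ℕ)) * Jmat n) i
          ⟨i - 1, by omega⟩ ⟨i - 1, by omega⟩ =
        (-1 : ℝ) ^ (i - 1) *
          ∏ k : Fin (i - 1),
            (t ⟨i - 1, by omega⟩ - t ⟨(k : ℕ), Nat.lt_of_lt_of_le k.2 (by omega)⟩) ∧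
      0 < (-1 : ℝ) ^ (i - 1) *
          ∏ k : Fin (i - 1),
            (t ⟨i - 1, by omega⟩ - t ⟨(k : ℕ), Nat.lt_of_lt_of_le k.2 (by omega)⟩)) ∧
    -- multipliers of the Neville elimination of the transpose of V_J
    (∀ i j : ℕ, ∀ hi : 1 ≤ i, ∀ hij : i < j, ∀ hjn : j ≤ n + 1,
      nevilleIter n ((Matrix.of fun i j : Fin (n + 1) => t i ^ (j : ℕ)) * Jmat n)ᵀ i
          ⟨j - 1, by omega⟩ ⟨i - 1, by omega⟩ /
        nevilleIter n ((Matrix.of fun i j : Fin (n + 1) => t i ^ (j : ℕ)) * Jmat n)ᵀ i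
          ⟨j - 2, by omega⟩ ⟨i - 1, by omega⟩ = -t ⟨i - 1, by omega⟩ ∧
      0 < -t ⟨i - 1, by omega⟩) := by
  set A := (Matrix.of fun i j : Fin (n + 1) => t i ^ (j : ℕ)) * Jmat n with hAdef
  set s : ℕ → ℝ := fun x => -t ⟨min x n, by omega⟩ with hsdef
  have hsval : ∀ (x : ℕ) (h : x < n + 1), s x = -t ⟨x, h⟩ := by
    intro x h
    simp only [hsdef]
    have he : (⟨min x n, by omega⟩ : Fin (n + 1)) = ⟨x, h⟩ := by
      apply Fin.ext; simp; omega
    rw [he]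
  have hsF : ∀ i : Fin (n + 1), s (i : ℕ) = -t i := by
    intro i
    rw [hsval _ i.2]
  have hpos : ∀ x, 0 < s x := by
    intro x
    have h1 : t ⟨min x n, by omega⟩ ≤ t 0 := htd.antitone (Fin.zero_le _)
    simp only [hsdef]
    linarith
  have hmono : ∀ a b : ℕ, a < b → b ≤ n → s a < s b := by
    intro a b hab hbn
    rw [hsval a (by omega), hsval b (by omega)]
    have : t ⟨b, by omega⟩ < t ⟨a, by omega⟩ := htd (by exact Fin.mk_lt_mk.mpr hab)
    linarith
  have hA : ∀ i j : Fin (n + 1), A i j = s (i : ℕ) ^ (j : ℕ) := by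
    intro i j
    rw [hAdef, Jmat, Matrix.mul_diagonal, Matrix.of_apply, hsF, neg_pow]
    ring
  have hB : ∀ i j : Fin (n + 1), Aᵀ i j = s (j : ℕ) ^ (i : ℕ) := by
    intro i j
    rw [Matrix.transpose_apply, hA]
  have IA := invA n s hmono A hA
  have IB := invB n s hpos hmono Aᵀ hB
  refine ⟨?_, ?_, ?_⟩
  · -- multipliers of V_J
    intro i j hj hji hin
    have h1 : nevilleIter n A j ⟨i - 1, by omega⟩ ⟨j - 1, by omega⟩ =
        Pprod s (i - 1) (j - 1) := by
      rw [IA j ⟨i - 1, by omega⟩ ⟨j - 1, by omega⟩]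
      show Pprod s (i - 1) (min (j - 1) (min (i - 1) (j - 1))) * _ = _
      rw [show min (j - 1) (min (i - 1) (j - 1)) = j - 1 by omega,
        show (j : ℕ) - 1 - (j - 1) = 0 by omega, Hpoly_zero, mul_one]
    have h2 : nevilleIter n A j ⟨i - 2, by omega⟩ ⟨j - 1, by omega⟩ =
        Pprod s (i - 2) (j - 1) := by
      rw [IA j ⟨i - 2, by omega⟩ ⟨j - 1, by omega⟩]
      show Pprod s (i - 2) (min (j - 1) (min (i - 2) (j - 1))) * _ = _
      rw [show min (j - 1) (min (i - 2) (j - 1)) = j - 1 by omega,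
        show (j : ℕ) - 1 - (j - 1) = 0 by omega, Hpoly_zero, mul_one]
    have ht' : ∀ (x : ℕ) (h : x < n + 1), t ⟨x, h⟩ = -s x := by
      intro x h; rw [hsval x h]; ring
    have key : Pprod s (i - 1) (j - 1) / Pprod s (i - 2) (j - 1) =
        ∏ k : Fin (j - 1),
          (t (⟨i - 1, by omega⟩ : Fin (n + 1)) - t ⟨i - 2 - (k : ℕ), by omega⟩) /
            (t (⟨i - 2, by omega⟩ : Fin (n + 1)) - t ⟨i - 3 - (k : ℕ), by omega⟩) := by
      rw [Fin.prod_univ_eq_prod_range (fun l =>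
        (t (⟨i - 1, by omega⟩ : Fin (n + 1)) - t ⟨i - 2 - l, by omega⟩) /
          (t (⟨i - 2, by omega⟩ : Fin (n + 1)) - t ⟨i - 3 - l, by omega⟩)) (j - 1)]
      rw [Pprod, Pprod, ← Finset.prod_div_distrib]
      apply Finset.prod_congr rfl
      intro l hl
      rw [Finset.mem_range] at hl
      rw [show i - 1 - (l + 1) = i - 2 - l by omega, show i - 2 - (l + 1) = i - 3 - l by omega]
      rw [hsval (i - 1) (by omega), hsval (i - 2 - l) (by omega),
        hsval (i - 2) (by omega), hsval (i - 3 - l) (by omega)]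
      rw [show ∀ a b c d : ℝ, (-a - -b) / (-c - -d) = (a - b)/(c - d) from by
        intro a b c d
        rw [show -a - -b = -(a - b) by ring, show -c - -d = -(c - d) by ring,
          neg_div_neg_eq]]
    constructor
    · rw [h1, h2]; exact key
    · have hdv : 0 < Pprod s (i - 1) (j - 1) / Pprod s (i - 2) (j - 1) :=
        div_pos (Pprod_pos s hmono (by omega) (by omega))
          (Pprod_pos s hmono (by omega) (by omega))
      rw [key] at hdv
      exact hdv
  · -- pivots
    intro i hi hin
    have ht' : ∀ (x : ℕ) (h : x < n + 1), t ⟨x, h⟩ = -s x := by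
      intro x h; rw [hsval x h]; ring
    have h1 : nevilleIter n A i ⟨i - 1, by omega⟩ ⟨i - 1, by omega⟩ =
        Pprod s (i - 1) (i - 1) := by
      rw [IA i ⟨i - 1, by omega⟩ ⟨i - 1, by omega⟩]
      show Pprod s (i - 1) (min (i - 1) (min (i - 1) (i - 1))) * _ = _
      rw [show min (i - 1) (min (i - 1) (i - 1)) = i - 1 by omega,
        show (i : ℕ) - 1 - (i - 1) = 0 by omega, Hpoly_zero, mul_one]
    have key : Pprod s (i - 1) (i - 1) =
        (-1 : ℝ) ^ (i - 1) *
          ∏ k : Fin (i - 1),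
            (t (⟨i - 1, by omega⟩ : Fin (n + 1)) - t ⟨(k : ℕ), by
              have := k.2; omega⟩) := by
      calc Pprod s (i - 1) (i - 1)
          = ∏ l ∈ Finset.range (i - 1), (-1 : ℝ) * (s (i - 1 - 1 - l) - s (i - 1)) := by
            apply Finset.prod_congr rfl
            intro l hl
            rw [Finset.mem_range] at hl
            rw [show i - 1 - (l + 1) = i - 1 - 1 - l by omega]
            ring
        _ = (-1 : ℝ) ^ (i - 1) * ∏ l ∈ Finset.range (i - 1), (s (i - 1 - 1 - l) - s (i - 1)) := by
            rw [Finset.prod_mul_distrib, Finset.prod_const, Finset.card_range]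
        _ = (-1 : ℝ) ^ (i - 1) * ∏ l ∈ Finset.range (i - 1), (s l - s (i - 1)) := by
            rw [Finset.prod_range_reflect (fun l => s l - s (i - 1)) (i - 1)]
        _ = _ := by
            congr 1
            rw [← Fin.prod_univ_eq_prod_range (fun l => s l - s (i - 1)) (i - 1)]
            apply Finset.prod_congr rfl
            intro k _
            have hk := k.2
            rw [ht' (i - 1) (by omega), ht' (k : ℕ) (by omega)]
            ring
    constructor
    · exact h1.trans key
    · exact lt_of_lt_of_eq (Pprod_pos s hmono le_rfl (by omega)) key
  · -- transpose multipliers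
    intro i j hi hij hjn
    have G1 : nevilleIter n Aᵀ i ⟨j - 1, by omega⟩ ⟨i - 1, by omega⟩ =
        s (i - 1) ^ (j - i) * Qprod s (i - 1) (i - 1) := by
      rw [IB i ⟨j - 1, by omega⟩ ⟨i - 1, by omega⟩]
      show s (i - 1) ^ (j - 1 - min (i - 1) (min (j - 1) (i - 1))) *
        Qprod s (i - 1) (min (i - 1) (min (j - 1) (i - 1))) = _
      rw [show min (i - 1) (min (j - 1) (i - 1)) = i - 1 by omega,
        show j - 1 - (i - 1) = j - i by omega]
    have G2 : nevilleIter n Aᵀ i ⟨j - 2, by omega⟩ ⟨i - 1, by omega⟩ =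
        s (i - 1) ^ (j - i - 1) * Qprod s (i - 1) (i - 1) := by
      rw [IB i ⟨j - 2, by omega⟩ ⟨i - 1, by omega⟩]
      show s (i - 1) ^ (j - 2 - min (i - 1) (min (j - 2) (i - 1))) *
        Qprod s (i - 1) (min (i - 1) (min (j - 2) (i - 1))) = _
      rw [show min (i - 1) (min (j - 2) (i - 1)) = i - 1 by omega,
        show j - 2 - (i - 1) = j - i - 1 by omega]
    have hQ : 0 < Qprod s (i - 1) (i - 1) := Qprod_pos s hmono le_rfl (by omega)
    have hp2 : (0 : ℝ) < s (i - 1) ^ (j - i - 1) := pow_pos (hpos _) _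
    constructor
    · rw [G1, G2, show j - i = (j - i - 1) + 1 by omega, pow_succ,
        ← hsval (i - 1) (by omega)]
      rw [Nat.add_sub_cancel, div_eq_iff (mul_pos hp2 hQ).ne']
      ring
    · rw [← hsval (i - 1) (by omega)]
      exact hpos _
end

section
/- The Wronskian matrix of the monomial basis (1, x, …, x^n) at a point x, W(x) := ((j-1)(j-2)⋯(j-i+1) x^{j-i})_{1 ≤ i,j ≤ n+1} (with entry 0 when i > j), is totally positive for every x ≥ 0, and J W(x) J is totally positive for every x ≤ 0, where J := diag((-1)^{i-1}). -/
open Finset Matrix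

namespace MonoWronsk

/-- If two strictly monotone maps differ, one has a value missed by the other. -/
lemma strictMono_missed {k N : ℕ} {f g : Fin k → Fin N} (hf : StrictMono f)
    (hg : StrictMono g) (hfg : f ≠ g) :
    (∃ i, ∀ j, f i ≠ g j) ∨ (∃ j, ∀ i, f i ≠ g j) := by
  classical
  have hs : (Finset.univ.filter fun i => f i ≠ g i).Nonempty := by
    rw [Function.ne_iff] at hfg
    obtain ⟨i, hi⟩ := hfg
    exact ⟨i, by simpa using hi⟩
  set s := Finset.univ.filter fun i => f i ≠ g i with hsdef
  set i0 := s.min' hs with hi0def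
  have hi0 : f i0 ≠ g i0 := by
    have := s.min'_mem hs
    simpa [hsdef] using this
  have hmin : ∀ l, l < i0 → f l = g l := by
    intro l hl
    by_contra hne
    have : i0 ≤ l := Finset.min'_le s l (by simp [hsdef, hne])
    omega
  rcases lt_or_gt_of_ne hi0 with h | h
  · left
    refine ⟨i0, fun j => ?_⟩
    rcases lt_trichotomy j i0 with hj' | hj' | hj'
    · have h3 : g j < f i0 := by rw [← hmin j hj']; exact hf hj'
      exact ne_of_gt h3
    · subst hj'; exact hi0
    · exact ne_of_lt (h.trans (hg hj'))
  · right
    refine ⟨i0, fun j => ?_⟩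
    rcases lt_trichotomy j i0 with hj' | hj' | hj'
    · have h3 : f j < g i0 := by rw [hmin j hj']; exact hg hj'
      exact ne_of_lt h3
    · subst hj'; exact hi0
    · exact ne_of_gt (h.trans (hf hj'))

lemma tp_one {N : ℕ} : IsTotallyPos (1 : Matrix (Fin N) (Fin N) ℝ) := by
  intro k f g hf hg
  by_cases hfg : f = g
  · subst hfg
    have h1 : (1 : Matrix (Fin N) (Fin N) ℝ).submatrix f f = 1 := by
      ext i j
      simp [Matrix.one_apply, hf.injective.eq_iff]
    rw [h1, Matrix.det_one]
    norm_num
  · rcases strictMono_missed hf hg hfg with ⟨i, hi⟩ | ⟨j, hj⟩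
    · refine le_of_eq (Matrix.det_eq_zero_of_row_eq_zero i ?_).symm
      intro j
      simp [Matrix.one_apply, hi j]
    · refine le_of_eq (Matrix.det_eq_zero_of_column_eq_zero j ?_).symm
      intro i
      simp [Matrix.one_apply, hj i]

/-- elementary bidiagonal matrix `1 + x E_{a,a+1}`. -/
noncomputable def Emat (N : ℕ) (x : ℝ) (a : ℕ) (ha : a + 1 < N) :
    Matrix (Fin N) (Fin N) ℝ :=
  1 + Matrix.single ⟨a, by omega⟩ ⟨a + 1, ha⟩ x

lemma Emat_mul_apply {N : ℕ} (x : ℝ) (a : ℕ) (ha : a + 1 < N)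
    (M : Matrix (Fin N) (Fin N) ℝ) (i j : Fin N) :
    (Emat N x a ha * M) i j =
      M i j + if (i : ℕ) = a then x * M ⟨a + 1, ha⟩ j else 0 := by
  rw [Emat, add_mul, one_mul, Matrix.add_apply]
  congr 1
  by_cases h : i = (⟨a, by omega⟩ : Fin N)
  · subst h
    rw [Matrix.single_mul_apply_same]
    simp
  · have hne : ¬ ((i : ℕ) = a) := fun hc => h (Fin.ext hc)
    rw [if_neg hne]
    exact Matrix.single_mul_apply_of_ne _ _ _ _ _ h M

/-- Left-multiplication by an elementary bidiagonal matrix with nonnegative entry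
preserves total positivity. -/
lemma tp_Emat_mul {N : ℕ} {x : ℝ} (hx : 0 ≤ x) (a : ℕ) (ha : a + 1 < N)
    {M : Matrix (Fin N) (Fin N) ℝ} (hM : IsTotallyPos M) :
    IsTotallyPos (Emat N x a ha * M) := by
  classical
  intro k f g hf hg
  by_cases hcase : ∃ i0, (f i0 : ℕ) = a
  · obtain ⟨i0, hi0⟩ := hcase
    set a1 : Fin N := ⟨a + 1, ha⟩ with ha1
    have hsub : (Emat N x a ha * M).submatrix f g =
        Matrix.updateRow (M.submatrix f g) i0
          (M.submatrix f g i0 + x • fun j => M a1 (g j)) := by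
      ext i j
      by_cases hii : i = i0
      · subst hii
        rw [Matrix.updateRow_self]
        simp only [Matrix.submatrix_apply, Pi.add_apply, Pi.smul_apply, smul_eq_mul]
        rw [Emat_mul_apply, if_pos hi0]
      · rw [Matrix.updateRow_ne hii, Matrix.submatrix_apply, Matrix.submatrix_apply,
          Emat_mul_apply]
        have : ¬ ((f i : ℕ) = a) := by
          intro hc
          exact hii (hf.injective (Fin.ext (hc.trans hi0.symm)))
        rw [if_neg this, add_zero]
    rw [hsub, Matrix.det_updateRow_add, Matrix.det_updateRow_smul,
      Matrix.updateRow_eq_self]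
    have h2 : Matrix.updateRow (M.submatrix f g) i0 (fun j => M a1 (g j)) =
        M.submatrix (Function.update f i0 a1) g := by
      ext i j
      by_cases hii : i = i0
      · subst hii; simp [Function.update_self]
      · rw [Matrix.updateRow_ne hii]
        simp [Function.update_of_ne hii]
    rw [h2]
    have hdet2 : 0 ≤ (M.submatrix (Function.update f i0 a1) g).det := by
      by_cases hex : ∃ i1, f i1 = a1
      · obtain ⟨i1, hi1⟩ := hex
        have hne : i1 ≠ i0 := by
          intro hc; subst hc
          rw [hi1] at hi0
          simp [ha1] at hi0
        refine le_of_eq (Matrix.det_zero_of_row_eq (Ne.symm hne) ?_).symm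
        funext j
        simp [Function.update_self, Function.update_of_ne hne, hi1]
      · push_neg at hex
        have hmono : StrictMono (Function.update f i0 a1) := by
          intro p q hpq
          rcases eq_or_ne p i0 with hp | hp <;> rcases eq_or_ne q i0 with hq | hq
          · exfalso; rw [hp, hq] at hpq; exact lt_irrefl _ hpq
          · subst hp
            rw [Function.update_self, Function.update_of_ne hq]
            have h1 : a < (f q : ℕ) := by
              have := hf hpq
              rw [Fin.lt_def, hi0] at this
              exact this
            have h2 : (f q : ℕ) ≠ a + 1 := fun hc => hex q (Fin.ext hc)
            rw [Fin.lt_def]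
            show a + 1 < (f q : ℕ)
            omega
          · subst hq
            rw [Function.update_self, Function.update_of_ne hp]
            have h1 : (f p : ℕ) < a := by
              have := hf hpq
              rw [Fin.lt_def, hi0] at this
              exact this
            rw [Fin.lt_def]
            show (f p : ℕ) < a + 1
            omega
          · rw [Function.update_of_ne hp, Function.update_of_ne hq]
            exact hf hpq
        exact hM k _ g hmono hg
    have hdet1 : 0 ≤ (M.submatrix f g).det := hM k f g hf hg
    have := mul_nonneg hx hdet2
    linarith
  · push_neg at hcase
    have hsub : (Emat N x a ha * M).submatrix f g = M.submatrix f g := by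
      ext i j
      rw [Matrix.submatrix_apply, Matrix.submatrix_apply, Emat_mul_apply,
        if_neg (hcase i), add_zero]
    rw [hsub]
    exact hM k f g hf hg

/-- bidiagonal matrix with `x` in superdiagonal slots `(i, i+1)` for `i ≥ m`. -/
noncomputable def Umat (N : ℕ) (x : ℝ) (m : ℕ) : Matrix (Fin N) (Fin N) ℝ :=
  Matrix.of fun i k =>
    (if i = k then (1 : ℝ) else 0) +
      (if (k : ℕ) = (i : ℕ) + 1 ∧ m ≤ (i : ℕ) then x else 0)

lemma Umat_eq_one {N : ℕ} (x : ℝ) {m : ℕ} (hm : N ≤ m + 1) : Umat N x m = 1 := by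
  ext i k
  rw [Umat, Matrix.of_apply, Matrix.one_apply]
  have h : ¬ ((k : ℕ) = (i : ℕ) + 1 ∧ m ≤ (i : ℕ)) := by
    rintro ⟨h1, h2⟩
    have := k.isLt
    omega
  rw [if_neg h, add_zero]

lemma Umat_succ {N : ℕ} (x : ℝ) {m : ℕ} (hm : m + 1 < N) :
    Umat N x m = Umat N x (m + 1) * Emat N x m hm := by
  ext i k
  rw [Emat, Matrix.mul_add, Matrix.mul_one, Matrix.add_apply]
  by_cases hk : k = (⟨m + 1, hm⟩ : Fin N)
  · subst hk
    rw [Matrix.mul_single_apply_same]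
    simp only [Umat, Matrix.of_apply, Fin.ext_iff]
    split_ifs <;> first | ring1 | (exfalso; omega)
  · rw [Matrix.mul_single_apply_of_ne _ _ _ _ _ hk, add_zero]
    have hkm : (k : ℕ) ≠ m + 1 := fun hc => hk (Fin.ext hc)
    simp only [Umat, Matrix.of_apply, Fin.ext_iff]
    split_ifs <;> first | ring1 | (exfalso; omega)

/-- partially reduced Pascal-type matrix. -/
noncomputable def Pmat (N : ℕ) (x : ℝ) (j : ℕ) : Matrix (Fin N) (Fin N) ℝ :=
  Matrix.of fun i k =>
    if (i : ℕ) < j then (if i = k then (1 : ℝ) else 0)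
    else if j ≤ (k : ℕ) then
      (Nat.choose ((k : ℕ) - j) ((i : ℕ) - j) : ℝ) * x ^ ((k : ℕ) - (i : ℕ))
    else 0

lemma Pmat_eq_one {N : ℕ} (x : ℝ) {j : ℕ} (hj : N ≤ j + 1) : Pmat N x j = 1 := by
  ext i k
  rw [Pmat, Matrix.of_apply, Matrix.one_apply]
  by_cases h1 : (i : ℕ) < j
  · rw [if_pos h1]
  · rw [if_neg h1]
    have hij : (i : ℕ) = j := by have := i.isLt; omega
    by_cases h2 : j ≤ (k : ℕ)
    · have hkj : (k : ℕ) = j := by have := k.isLt; omega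
      have h3 : i = k := Fin.ext (by omega)
      rw [if_pos h2, if_pos h3]
      have e1 : (k : ℕ) - j = 0 := by omega
      have e2 : (i : ℕ) - j = 0 := by omega
      have e3 : (k : ℕ) - (i : ℕ) = 0 := by omega
      rw [e1, e2, e3]
      norm_num
    · have hik : ¬ i = k := fun hc => by
        rw [hc] at hij
        omega
      rw [if_neg h2, if_neg hik]

/-- the scalar recurrence behind `Pmat_succ`, interior case. -/
lemma choose_rec (x : ℝ) (j I K : ℕ) :
    (if I < j then (if I = K then (1 : ℝ) else 0)
      else if j ≤ K then (Nat.choose (K - j) (I - j) : ℝ) * x ^ (K - I) else 0)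
    = (if I < j + 1 then (if I = K then (1 : ℝ) else 0)
        else if j + 1 ≤ K then (Nat.choose (K - (j + 1)) (I - (j + 1)) : ℝ) * x ^ (K - I)
        else 0)
      + (if j ≤ I then
          x * (if I + 1 < j + 1 then (if I + 1 = K then (1 : ℝ) else 0)
            else if j + 1 ≤ K then
              (Nat.choose (K - (j + 1)) (I + 1 - (j + 1)) : ℝ) * x ^ (K - (I + 1))
            else 0)
        else 0) := by
  by_cases h1 : I < j
  · rw [if_pos h1, if_pos (by omega : I < j + 1), if_neg (by omega : ¬ j ≤ I), add_zero]
  · rw [if_neg h1, if_pos (by omega : j ≤ I), if_neg (by omega : ¬ I + 1 < j + 1)]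
    by_cases h5 : I = j
    · subst h5
      rw [if_pos (by omega : I < I + 1)]
      have e0 : I - I = 0 := by omega
      have e1 : I + 1 - (I + 1) = 0 := by omega
      rw [e0, e1]
      by_cases h7 : I + 1 ≤ K
      · rw [if_pos (by omega : I ≤ K), if_pos h7,
          if_neg (by omega : ¬ I = K)]
        have e2 : K - I = (K - (I + 1)) + 1 := by omega
        rw [e2, pow_succ, Nat.choose_zero_right, Nat.choose_zero_right]
        push_cast
        ring
      · rw [if_neg h7]
        by_cases h8 : I ≤ K
        · have h9 : I = K := by omega
          rw [if_pos h8, if_pos h9, Nat.choose_zero_right]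
          have e2 : K - I = 0 := by omega
          rw [e2]
          norm_num
        · rw [if_neg h8, if_neg (by omega : ¬ I = K)]
          ring
    · rw [if_neg (by omega : ¬ I < j + 1)]
      by_cases h6 : j + 1 ≤ K
      · rw [if_pos (by omega : j ≤ K), if_pos h6, if_pos h6]
        obtain ⟨s, hs⟩ : ∃ s, K - j = s + 1 := ⟨K - j - 1, by omega⟩
        obtain ⟨t, ht⟩ : ∃ t, I - j = t + 1 := ⟨I - j - 1, by omega⟩
        have e1 : K - (j + 1) = s := by omega
        have e2 : I - (j + 1) = t := by omega
        have e3 : I + 1 - (j + 1) = t + 1 := by omega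
        rw [hs, ht, e1, e2, e3, Nat.choose_succ_succ]
        by_cases h7 : I < K
        · have e4 : K - I = (K - (I + 1)) + 1 := by omega
          rw [e4, pow_succ]
          push_cast
          ring
        · have hz : Nat.choose s (t + 1) = 0 := Nat.choose_eq_zero_of_lt (by omega)
          rw [hz]
          push_cast
          ring
      · rw [if_neg h6, if_neg h6]
        by_cases h8 : j ≤ K
        · rw [if_pos h8]
          have e1 : K - j = 0 := by omega
          rw [e1, Nat.choose_eq_zero_of_lt (by omega : 0 < I - j)]
          push_cast
          ring
        · rw [if_neg h8]
          ring

/-- the scalar recurrence behind `Pmat_succ`, boundary case `K ≤ I`. -/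
lemma choose_top (x : ℝ) (j I K : ℕ) (hK : K ≤ I) :
    (if I < j then (if I = K then (1 : ℝ) else 0)
      else if j ≤ K then (Nat.choose (K - j) (I - j) : ℝ) * x ^ (K - I) else 0)
    = (if I < j + 1 then (if I = K then (1 : ℝ) else 0)
        else if j + 1 ≤ K then (Nat.choose (K - (j + 1)) (I - (j + 1)) : ℝ) * x ^ (K - I)
        else 0) := by
  by_cases h1 : I < j
  · rw [if_pos h1, if_pos (by omega : I < j + 1)]
  · rw [if_neg h1]
    by_cases h5 : I = j
    · subst h5
      rw [if_pos (by omega : I < I + 1)]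
      by_cases h8 : I ≤ K
      · have h9 : I = K := by omega
        rw [if_pos h8, if_pos h9]
        have e1 : K - I = 0 := by omega
        have e2 : I - I = 0 := by omega
        rw [e1, e2]
        norm_num
      · rw [if_neg h8, if_neg (by omega : ¬ I = K)]
    · rw [if_neg (by omega : ¬ I < j + 1)]
      by_cases h6 : j + 1 ≤ K
      · rw [if_pos (by omega : j ≤ K), if_pos h6]
        obtain ⟨s, hs⟩ : ∃ s, K - j = s + 1 := ⟨K - j - 1, by omega⟩
        obtain ⟨t, ht⟩ : ∃ t, I - j = t + 1 := ⟨I - j - 1, by omega⟩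
        have e1 : K - (j + 1) = s := by omega
        have e2 : I - (j + 1) = t := by omega
        rw [hs, ht, e1, e2, Nat.choose_succ_succ]
        have hz : Nat.choose s (t + 1) = 0 := Nat.choose_eq_zero_of_lt (by omega)
        rw [hz]
        push_cast
        ring
      · rw [if_neg h6]
        by_cases h8 : j ≤ K
        · rw [if_pos h8]
          have e1 : K - j = 0 := by omega
          rw [e1, Nat.choose_eq_zero_of_lt (by omega : 0 < I - j)]
          push_cast
          ring
        · rw [if_neg h8]

lemma Pmat_succ {N : ℕ} (x : ℝ) (j : ℕ) :
    Pmat N x j = Umat N x j * Pmat N x (j + 1) := by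
  classical
  ext i k
  rw [Matrix.mul_apply]
  have hsum : ∀ t : Fin N, Umat N x j i t * Pmat N x (j + 1) t k =
      (if i = t then Pmat N x (j + 1) t k else 0) +
      (if (t : ℕ) = (i : ℕ) + 1 ∧ j ≤ (i : ℕ) then x * Pmat N x (j + 1) t k else 0) := by
    intro t
    rw [Umat, Matrix.of_apply, add_mul]
    congr 1
    · split_ifs <;> ring
    · split_ifs <;> ring
  rw [Finset.sum_congr rfl fun t _ => hsum t, Finset.sum_add_distrib,
    Finset.sum_ite_eq Finset.univ i (fun t => Pmat N x (j + 1) t k),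
    if_pos (Finset.mem_univ i)]
  by_cases hN : (i : ℕ) + 1 < N
  · have hterm : ∀ t : Fin N,
        (if (t : ℕ) = (i : ℕ) + 1 ∧ j ≤ (i : ℕ) then x * Pmat N x (j + 1) t k else 0) =
        (if t = (⟨(i : ℕ) + 1, hN⟩ : Fin N) then
          (if j ≤ (i : ℕ) then x * Pmat N x (j + 1) t k else 0) else 0) := by
      intro t
      by_cases hB : t = (⟨(i : ℕ) + 1, hN⟩ : Fin N)
      · subst hB
        rw [if_pos rfl]
        by_cases hC : j ≤ (i : ℕ)
        · rw [if_pos ⟨rfl, hC⟩, if_pos hC]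
        · rw [if_neg (fun h => hC h.2), if_neg hC]
      · have : ¬ ((t : ℕ) = (i : ℕ) + 1 ∧ j ≤ (i : ℕ)) := fun h => hB (Fin.ext h.1)
        rw [if_neg this, if_neg hB]
    rw [Finset.sum_congr rfl fun t _ => hterm t,
      Finset.sum_ite_eq' Finset.univ (⟨(i : ℕ) + 1, hN⟩ : Fin N),
      if_pos (Finset.mem_univ _)]
    have hfin1 : ∀ (p q : Fin N), (if p = q then (1 : ℝ) else 0) =
        (if (p : ℕ) = (q : ℕ) then 1 else 0) := by
      intro p q
      simp [Fin.ext_iff]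
    simp only [Pmat, Matrix.of_apply, hfin1]
    exact choose_rec x j (i : ℕ) (k : ℕ)
  · have hzero : ∀ t : Fin N,
        (if (t : ℕ) = (i : ℕ) + 1 ∧ j ≤ (i : ℕ) then x * Pmat N x (j + 1) t k else 0) = 0 := by
      intro t
      have h : ¬ ((t : ℕ) = (i : ℕ) + 1 ∧ j ≤ (i : ℕ)) := by
        rintro ⟨h1, _⟩
        have := t.isLt
        omega
      rw [if_neg h]
    rw [Finset.sum_eq_zero fun t _ => hzero t, add_zero]
    have hfin1 : ∀ (p q : Fin N), (if p = q then (1 : ℝ) else 0) =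
        (if (p : ℕ) = (q : ℕ) then 1 else 0) := by
      intro p q
      simp [Fin.ext_iff]
    simp only [Pmat, Matrix.of_apply, hfin1]
    exact choose_top x j (i : ℕ) (k : ℕ) (by have := k.isLt; omega)

lemma tp_Umat_mul {N : ℕ} {x : ℝ} (hx : 0 ≤ x) :
    ∀ (d m : ℕ) (M : Matrix (Fin N) (Fin N) ℝ), N ≤ m + 1 + d → IsTotallyPos M →
      IsTotallyPos (Umat N x m * M) := by
  intro d
  induction d with
  | zero =>
    intro m M h hM
    rw [Umat_eq_one x (by omega), one_mul]
    exact hM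
  | succ d ih =>
    intro m M h hM
    by_cases hm : m + 1 < N
    · rw [Umat_succ x hm, Matrix.mul_assoc]
      exact ih (m + 1) _ (by omega) (tp_Emat_mul hx m hm hM)
    · rw [Umat_eq_one x (by omega), one_mul]
      exact hM

lemma tp_Pmat {N : ℕ} {x : ℝ} (hx : 0 ≤ x) :
    ∀ (d j : ℕ), N ≤ j + 1 + d → IsTotallyPos (Pmat N x j) := by
  intro d
  induction d with
  | zero =>
    intro j h
    rw [Pmat_eq_one x (by omega)]
    exact tp_one
  | succ d ih =>
    intro j h
    by_cases hj : N ≤ j + 1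
    · rw [Pmat_eq_one x hj]
      exact tp_one
    · rw [Pmat_succ]
      exact tp_Umat_mul hx N j _ (by omega) (ih (j + 1) (by omega))

lemma tp_diag_mul {N : ℕ} {d : Fin N → ℝ} (hd : ∀ i, 0 ≤ d i)
    {M : Matrix (Fin N) (Fin N) ℝ} (hM : IsTotallyPos M) :
    IsTotallyPos (Matrix.diagonal d * M) := by
  intro k f g hf hg
  have hsub : (Matrix.diagonal d * M).submatrix f g =
      Matrix.diagonal (fun i => d (f i)) * M.submatrix f g := by
    ext i j
    rw [Matrix.submatrix_apply, Matrix.diagonal_mul, Matrix.diagonal_mul,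
      Matrix.submatrix_apply]
  rw [hsub, Matrix.det_mul, Matrix.det_diagonal]
  exact mul_nonneg (Finset.prod_nonneg fun i _ => hd (f i)) (hM k f g hf hg)

lemma tp_W (n : ℕ) {x : ℝ} (hx : 0 ≤ x) :
    IsTotallyPos (Matrix.of fun i j : Fin (n + 1) =>
      (Nat.descFactorial (j : ℕ) (i : ℕ) : ℝ) * x ^ ((j : ℕ) - (i : ℕ))) := by
  have hW : (Matrix.of fun i j : Fin (n + 1) =>
      (Nat.descFactorial (j : ℕ) (i : ℕ) : ℝ) * x ^ ((j : ℕ) - (i : ℕ)))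
      = Matrix.diagonal (fun i : Fin (n + 1) => (((i : ℕ).factorial : ℝ))) *
        Pmat (n + 1) x 0 := by
    ext i k
    rw [Matrix.of_apply, Matrix.diagonal_mul, Pmat, Matrix.of_apply,
      if_neg (by omega : ¬ (i : ℕ) < 0), if_pos (Nat.zero_le _),
      Nat.descFactorial_eq_factorial_mul_choose]
    rw [Nat.sub_zero, Nat.sub_zero]
    push_cast
    ring
  rw [hW]
  exact tp_diag_mul (fun i => by positivity) (tp_Pmat hx (n + 1) 0 (by omega))

lemma JWJ (n : ℕ) (x : ℝ) :
    Jmat n * (Matrix.of fun i j : Fin (n + 1) =>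
        (Nat.descFactorial (j : ℕ) (i : ℕ) : ℝ) * x ^ ((j : ℕ) - (i : ℕ))) * Jmat n
    = Matrix.of (fun i j : Fin (n + 1) =>
        (Nat.descFactorial (j : ℕ) (i : ℕ) : ℝ) * (-x) ^ ((j : ℕ) - (i : ℕ))) := by
  ext i j
  rw [Jmat, Matrix.mul_diagonal, Matrix.diagonal_mul, Matrix.of_apply, Matrix.of_apply]
  by_cases hij : (i : ℕ) ≤ (j : ℕ)
  · have key : (-1 : ℝ) ^ (i : ℕ) * (-1 : ℝ) ^ (j : ℕ) = (-1 : ℝ) ^ ((j : ℕ) - (i : ℕ)) := by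
      rw [← pow_add]
      have e : (i : ℕ) + (j : ℕ) = ((j : ℕ) - (i : ℕ)) + 2 * (i : ℕ) := by omega
      rw [e, pow_add, pow_mul, neg_one_sq, one_pow, mul_one]
    rw [neg_pow x, ← key]
    ring
  · rw [Nat.descFactorial_eq_zero_iff_lt.mpr (by omega)]
    push_cast
    ring

end MonoWronsk

theorem monomial_wronskian_totallyPos (n : ℕ) (x : ℝ) :
    (0 ≤ x → IsTotallyPos
      (Matrix.of fun i j : Fin (n + 1) =>
        (Nat.descFactorial (j : ℕ) (i : ℕ) : ℝ) * x ^ ((j : ℕ) - (i : ℕ)))) ∧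
    (x ≤ 0 → IsTotallyPos
      (Jmat n *
        (Matrix.of fun i j : Fin (n + 1) =>
          (Nat.descFactorial (j : ℕ) (i : ℕ) : ℝ) * x ^ ((j : ℕ) - (i : ℕ))) *
        Jmat n)) := by
  constructor
  · exact fun hx => MonoWronsk.tp_W n hx
  · intro hx
    rw [MonoWronsk.JWJ]
    exact MonoWronsk.tp_W n (neg_nonneg.mpr hx)
end
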